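/- Let a : ℕ → ℂ and C > 0 be such that |a_n| ≤ C^{n+1} for every n, and define f : ℝ → ℂ by f(t) = ∑'_{n} a_n·t^n/n!. Then for every real number x > C: the function t ↦ exp(−x·t)·f(t) is integrable on [0, ∞), the series ∑_n a_n/x^{n+1} is absolutely convergent, and ∫_0^∞ exp(−x·t)·f(t) dt = ∑'_{n} a_n/x^{n+1}. -/

import Mathlib

open MeasureTheory Set Filter

private lemma exp_tsum_aux (y : ℝ) : (∑' n : ℕ, y ^ n / n.factorial) = Real.exp y := by
  rw [Real.exp_eq_exp_ℝ, NormedSpace.exp_eq_tsum_div]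

private lemma aux_integrableOn (x : ℝ) (hx : 0 < x) (n : ℕ) :
    IntegrableOn (fun t : ℝ => Real.exp (-(x * t)) * t ^ n) (Set.Ioi 0) := by
  apply integrable_of_isBigO_exp_neg (a := 0) (b := x / 2) (by positivity)
  · exact ((Real.continuous_exp.comp ((continuous_const.mul continuous_id).neg)).mul
      (continuous_pow n)).continuousOn
  · have h : Filter.Tendsto (fun t : ℝ => t ^ n * Real.exp (-(x / 2 * t))) atTop (nhds 0) := by
      have h1 := (Real.tendsto_pow_mul_exp_neg_atTop_nhds_zero n).comp
        (tendsto_id.const_mul_atTop (half_pos hx) (f := id))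
      have h2 : Filter.Tendsto (fun t : ℝ => ((2 / x) ^ n) *
          ((x / 2 * t) ^ n * Real.exp (-(x / 2 * t)))) atTop (nhds 0) := by
        simpa using h1.const_mul ((2 / x) ^ n)
      refine h2.congr' ?_
      filter_upwards with t
      rw [mul_pow, ← mul_assoc, ← mul_assoc, ← mul_pow]
      field_simp
      simp
    rw [Asymptotics.isBigO_iff]
    refine ⟨1, ?_⟩
    filter_upwards [h.eventually (eventually_le_nhds (by norm_num : (0:ℝ) < 1)),
      eventually_ge_atTop (0:ℝ)] with t ht ht0
    have : Real.exp (-(x * t)) = Real.exp (-(x/2 * t)) * Real.exp (-(x/2 * t)) := by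
      rw [← Real.exp_add]; ring_nf
    rw [Real.norm_eq_abs, Real.norm_eq_abs, abs_of_nonneg (by positivity),
      abs_of_nonneg (Real.exp_pos _).le, this, one_mul]
    calc Real.exp (-(x/2*t)) * Real.exp (-(x/2*t)) * t ^ n
        = (t ^ n * Real.exp (-(x/2*t))) * Real.exp (-(x/2*t)) := by ring
      _ ≤ 1 * Real.exp (-(x/2*t)) := by
          refine mul_le_mul_of_nonneg_right ht (Real.exp_pos _).le
      _ = Real.exp (-(x/2) * t) := by rw [one_mul]; ring_nf

private lemma aux_real_integral (x : ℝ) (hx : 0 < x) (n : ℕ) :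
    ∫ t in Set.Ioi (0:ℝ), Real.exp (-(x * t)) * t ^ n = n.factorial / x ^ (n + 1) := by
  have h := Real.integral_rpow_mul_exp_neg_mul_Ioi (a := (n : ℝ) + 1) (r := x)
    (by positivity) hx
  rw [show ∫ t in Set.Ioi (0:ℝ), t ^ ((n:ℝ) + 1 - 1) * Real.exp (-(x * t))
      = ∫ t in Set.Ioi (0:ℝ), Real.exp (-(x * t)) * t ^ n from
    setIntegral_congr_fun measurableSet_Ioi fun t ht => by
      rw [add_sub_cancel_right, Real.rpow_natCast, mul_comm]] at h
  rw [h, Real.Gamma_nat_eq_factorial, show ((n:ℝ) + 1) = ((n + 1 : ℕ) : ℝ) by push_cast; ring,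
    Real.rpow_natCast]
  rw [div_pow, one_pow, div_mul_eq_mul_div, one_mul]

private lemma aux_complex_integral (x : ℝ) (hx : 0 < x) (n : ℕ) :
    ∫ t in Set.Ioi (0:ℝ), Complex.exp (-(x * t : ℝ)) * (t : ℂ) ^ n
      = (n.factorial : ℂ) / (x : ℂ) ^ (n + 1) := by
  have h := Complex.integral_cpow_mul_exp_neg_mul_Ioi (a := (n : ℂ) + 1) (r := x)
    (by simp [Complex.add_re]; positivity) hx
  rw [show (∫ t in Set.Ioi (0:ℝ), Complex.exp (-(x * t : ℝ)) * (t : ℂ) ^ n)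
      = ∫ t in Set.Ioi (0:ℝ), (t : ℂ) ^ ((n:ℂ) + 1 - 1) * Complex.exp (-((x:ℂ) * (t:ℂ))) from
    setIntegral_congr_fun measurableSet_Ioi fun t ht => by
      rw [add_sub_cancel_right, Complex.cpow_natCast]; push_cast; ring]
  rw [h, Complex.Gamma_nat_eq_factorial, show ((n:ℂ) + 1) = ((n + 1 : ℕ) : ℂ) by push_cast; ring,
    Complex.cpow_natCast]
  rw [div_pow, one_pow, div_mul_eq_mul_div, one_mul]

/-- Laplace transform of an entire function with coefficient bound
`|a_n| ≤ C^(n+1)`: for `x > C`, `∫_0^∞ e^{−xt} (∑ a_n t^n/n!) dt = ∑ a_n/x^{n+1}`. -/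
theorem laplace_transform_of_EFunction
    (a : ℕ → ℂ) (C : ℝ) (hC : 0 < C)
    (ha : ∀ n : ℕ, ‖a n‖ ≤ C ^ (n + 1))
    (f : ℝ → ℂ) (hf : ∀ t : ℝ, f t = ∑' n : ℕ, a n * (t : ℂ) ^ n / (n.factorial : ℂ)) :
    ∀ x : ℝ, C < x →
      IntegrableOn (fun t : ℝ => Complex.exp (-(x * t : ℝ)) * f t) (Set.Ici 0) ∧
      Summable (fun n : ℕ => ‖a n / (x : ℂ) ^ (n + 1)‖) ∧
      ∫ t in Set.Ioi (0 : ℝ), Complex.exp (-(x * t : ℝ)) * f t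
        = ∑' n : ℕ, a n / (x : ℂ) ^ (n + 1) := by
  intro x hx
  have hx0 : 0 < x := hC.trans hx
  set F : ℕ → ℝ → ℂ :=
    fun n t => Complex.exp (-(x * t : ℝ)) * (a n * (t : ℂ) ^ n / (n.factorial : ℂ)) with hF
  -- norm of a single series term
  have hterm : ∀ (n : ℕ) (t : ℝ),
      ‖a n * (t : ℂ) ^ n / (n.factorial : ℂ)‖ = ‖a n‖ * |t| ^ n / n.factorial := by
    intro n t
    rw [norm_div, norm_mul, norm_pow, Complex.norm_real, Real.norm_eq_abs,
      Complex.norm_natCast]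
  have htermle : ∀ (n : ℕ) (t : ℝ),
      ‖a n * (t : ℂ) ^ n / (n.factorial : ℂ)‖ ≤ C * ((C * |t|) ^ n / n.factorial) := by
    intro n t
    rw [hterm]
    calc ‖a n‖ * |t| ^ n / n.factorial ≤ C ^ (n + 1) * |t| ^ n / n.factorial := by
          gcongr; exact ha n
      _ = C * ((C * |t|) ^ n / n.factorial) := by rw [mul_pow, pow_succ]; ring
  have hsummN' : ∀ t : ℝ, Summable (fun n : ℕ => ‖a n * (t : ℂ) ^ n / (n.factorial : ℂ)‖) := by
    intro t
    refine Summable.of_nonneg_of_le (fun n => norm_nonneg _) (fun n => htermle n t) ?_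
    exact (Real.summable_pow_div_factorial (C * |t|)).mul_left C
  have hsumm : ∀ t : ℝ, Summable (fun n : ℕ => a n * (t : ℂ) ^ n / (n.factorial : ℂ)) :=
    fun t => (hsummN' t).of_norm
  have hHS : ∀ t : ℝ, HasSum (fun n => F n t) (Complex.exp (-(x * t : ℝ)) * f t) := by
    intro t
    rw [hf t]
    exact (hsumm t).hasSum.mul_left _
  -- norm of F n t for t ≥ 0
  have hnorm : ∀ (n : ℕ) (t : ℝ), 0 ≤ t →
      ‖F n t‖ = (‖a n‖ / n.factorial) * (Real.exp (-(x * t)) * t ^ n) := by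
    intro n t ht
    rw [hF]
    rw [norm_mul, hterm, Complex.norm_exp, abs_of_nonneg ht]
    simp only [Complex.neg_re, Complex.ofReal_re]
    ring
  -- per-term integrability
  have hFint : ∀ n : ℕ, IntegrableOn (F n) (Set.Ioi 0) := by
    intro n
    refine IntegrableOn.congr_fun (f := fun t : ℝ =>
        (a n / (n.factorial : ℂ)) * ((Real.exp (-(x * t)) * t ^ n : ℝ) : ℂ))
      (((aux_integrableOn x hx0 n).ofReal).const_mul (a n / (n.factorial : ℂ)))
      (fun t _ => ?_) measurableSet_Ioi
    simp only [hF]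
    push_cast
    ring
  -- per-term integral of norms
  have hnormint : ∀ n : ℕ, ∫ t in Set.Ioi (0:ℝ), ‖F n t‖ = ‖a n‖ / x ^ (n + 1) := by
    intro n
    rw [setIntegral_congr_fun measurableSet_Ioi (fun t ht => hnorm n t (le_of_lt ht)),
      integral_const_mul, aux_real_integral x hx0 n]
    have hn : (n.factorial : ℝ) ≠ 0 := Nat.cast_ne_zero.mpr n.factorial_ne_zero
    field_simp
  -- summability of ‖a n‖ / x^(n+1)
  have hsummN : Summable (fun n : ℕ => ‖a n‖ / x ^ (n + 1)) := by
    have hr : C / x < 1 := (div_lt_one hx0).mpr hx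
    have hgeo : Summable (fun n : ℕ => (C / x) ^ (n + 1)) := by
      refine ((summable_geometric_of_lt_one (by positivity) hr).mul_right (C / x)).congr
        (fun n => ?_)
      rw [pow_succ]
    refine Summable.of_nonneg_of_le (fun n => by positivity) (fun n => ?_) hgeo
    rw [div_pow]
    gcongr
    exact ha n
  have hsumm2 : Summable (fun n : ℕ => ‖a n / (x : ℂ) ^ (n + 1)‖) := by
    refine hsummN.congr (fun n => ?_)
    rw [norm_div, norm_pow, Complex.norm_real, Real.norm_eq_abs, abs_of_pos hx0]
  -- the series of integrals of norms is summable
  have hFsum : Summable (fun n : ℕ => ∫ t in Set.Ioi (0:ℝ), ‖F n t‖) :=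
    hsummN.congr (fun n => (hnormint n).symm)
  -- per-term integral value
  have hval : ∀ n : ℕ, ∫ t in Set.Ioi (0:ℝ), F n t = a n / (x : ℂ) ^ (n + 1) := by
    intro n
    have : ∫ t in Set.Ioi (0:ℝ), F n t
        = ∫ t in Set.Ioi (0:ℝ), (a n / (n.factorial : ℂ)) *
          (Complex.exp (-(x * t : ℝ)) * (t : ℂ) ^ n) :=
      setIntegral_congr_fun measurableSet_Ioi (fun t _ => by rw [hF]; ring)
    rw [this, integral_const_mul, aux_complex_integral x hx0 n]
    have hn : (n.factorial : ℂ) ≠ 0 := Nat.cast_ne_zero.mpr n.factorial_ne_zero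
    have hxc : (x : ℂ) ≠ 0 := Complex.ofReal_ne_zero.mpr hx0.ne'
    field_simp
  -- measurability of the integrand
  have hmeas : AEStronglyMeasurable (fun t : ℝ => Complex.exp (-(x * t : ℝ)) * f t)
      (volume.restrict (Set.Ioi 0)) := by
    have hcont : ∀ N : ℕ, Continuous (fun t : ℝ => ∑ n ∈ Finset.range N, F n t) := by
      intro N
      refine continuous_finset_sum _ (fun n _ => ?_)
      rw [hF]
      fun_prop
    exact aestronglyMeasurable_of_tendsto_ae atTop
      (fun N => (hcont N).aestronglyMeasurable)
      (Filter.Eventually.of_forall fun t => (hHS t).tendsto_sum_nat)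
  -- domination
  have hbound_int : IntegrableOn (fun t : ℝ => C * Real.exp (-(x - C) * t)) (Set.Ioi 0) :=
    (exp_neg_integrableOn_Ioi 0 (by linarith)).const_mul C
  have hbound : ∀ t : ℝ, 0 < t →
      ‖Complex.exp (-(x * t : ℝ)) * f t‖ ≤ C * Real.exp (-(x - C) * t) := by
    intro t ht
    rw [norm_mul, Complex.norm_exp]
    simp only [Complex.neg_re, Complex.ofReal_re]
    have h1 : ‖f t‖ ≤ C * Real.exp (C * t) := by
      rw [hf t]
      refine le_trans (norm_tsum_le_tsum_norm (hsummN' t)) ?_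
      have h2 : (∑' n : ℕ, ‖a n * (t : ℂ) ^ n / (n.factorial : ℂ)‖)
          ≤ ∑' n : ℕ, C * ((C * |t|) ^ n / n.factorial) :=
        Summable.tsum_le_tsum (fun n => htermle n t) (hsummN' t)
          ((Real.summable_pow_div_factorial (C * |t|)).mul_left C)
      refine h2.trans_eq ?_
      rw [tsum_mul_left, exp_tsum_aux, abs_of_pos ht]
    calc Real.exp (-(x * t)) * ‖f t‖ ≤ Real.exp (-(x * t)) * (C * Real.exp (C * t)) := by
          exact mul_le_mul_of_nonneg_left h1 (Real.exp_pos _).le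
      _ = C * Real.exp (-(x - C) * t) := by
          rw [← mul_assoc, mul_comm (Real.exp _) C, mul_assoc, ← Real.exp_add]
          ring_nf
  have hint : IntegrableOn (fun t : ℝ => Complex.exp (-(x * t : ℝ)) * f t) (Set.Ioi 0) := by
    refine Integrable.mono' hbound_int hmeas ?_
    rw [ae_restrict_iff' measurableSet_Ioi]
    exact Filter.Eventually.of_forall fun t ht => hbound t ht
  refine ⟨Iff.mpr integrableOn_Ici_iff_integrableOn_Ioi hint, hsumm2, ?_⟩
  have hkey := MeasureTheory.integral_tsum_of_summable_integral_norm hFint hFsum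
  calc ∫ t in Set.Ioi (0:ℝ), Complex.exp (-(x * t : ℝ)) * f t
      = ∫ t in Set.Ioi (0:ℝ), ∑' n : ℕ, F n t :=
        setIntegral_congr_fun measurableSet_Ioi (fun t _ => ((hHS t).tsum_eq).symm)
    _ = ∑' n : ℕ, ∫ t in Set.Ioi (0:ℝ), F n t := hkey.symm
    _ = ∑' n : ℕ, a n / (x : ℂ) ^ (n + 1) := by exact tsum_congr hval
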